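/- With f and g as defined (g(n) = 10^{n/5}, f as the four-piece function from the main theorem), for every integer n ≥ 7 one has f(n)/g(n) ≤ f(10)/g(10) ≤ 0.85. -/
import Mathlib

/-- `g n = 10 ^ (n/5)` (real power). -/
noncomputable def g (n : ℕ) : ℝ := (10 : ℝ) ^ ((n : ℝ) / 5)

/-- The four-piece function `f` from the main theorem. -/
noncomputable def f (n : ℕ) : ℝ :=
  if n ≤ 8 then (n.choose 2 : ℝ)
  else if n ≤ 13 then
    ((n / 2).choose 2 : ℝ) * (((n + 1) / 2).choose 2 : ℝ)
      - (((n / 2 : ℕ) : ℝ) - 1) * ((((n + 1) / 2 : ℕ) : ℝ) - 1) + 1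
  else if n ≤ 30 then
    (10 : ℝ) ^ (((n : ℝ) - 1) / 5) + (((n : ℝ) + 144) / 30) * (6 : ℝ) ^ (((n : ℝ) - 6) / 5)
  else
    (10 : ℝ) ^ (((n : ℝ) - 1) / 5) + (((n : ℝ) - 1) / 5) * (6 : ℝ) ^ (((n : ℝ) - 6) / 5)

noncomputable def u : ℝ := (10 : ℝ) ^ ((1:ℝ)/5)
noncomputable def v : ℝ := (6 : ℝ) ^ ((1:ℝ)/5)

lemma hu0 : 0 < u := Real.rpow_pos_of_pos (by norm_num) _
lemma hv0 : 0 < v := Real.rpow_pos_of_pos (by norm_num) _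

lemma hu5 : u ^ 5 = 10 := by
  rw [u, ← Real.rpow_natCast ((10:ℝ) ^ ((1:ℝ)/5)) 5, ← Real.rpow_mul (by norm_num)]
  norm_num

lemma hv5 : v ^ 5 = 6 := by
  rw [v, ← Real.rpow_natCast ((6:ℝ) ^ ((1:ℝ)/5)) 5, ← Real.rpow_mul (by norm_num)]
  norm_num

lemma hul : (1.5848 : ℝ) ≤ u := by
  by_contra h
  push_neg at h
  have := pow_lt_pow_left₀ h hu0.le (n := 5) (by norm_num)
  rw [hu5] at this; norm_num at this

lemma hvu : v ≤ (1.431 : ℝ) := by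
  by_contra h
  push_neg at h
  have := pow_lt_pow_left₀ h (by norm_num) (n := 5) (by norm_num)
  rw [hv5] at this; norm_num at this

lemma pow10 (n : ℕ) : (10 : ℝ) ^ ((n : ℝ) / 5) = u ^ n := by
  rw [show (n:ℝ)/5 = (1/5) * n by ring, Real.rpow_mul (by norm_num), Real.rpow_natCast, u]

lemma pow10' {n : ℕ} (hn : 1 ≤ n) : (10 : ℝ) ^ (((n : ℝ) - 1) / 5) = u ^ (n - 1) := by
  rw [show (n:ℝ) - 1 = ((n - 1 : ℕ) : ℝ) by push_cast [Nat.cast_sub hn]; ring]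
  exact pow10 (n - 1)

lemma pow6' {n : ℕ} (hn : 6 ≤ n) : (6 : ℝ) ^ (((n : ℝ) - 6) / 5) = v ^ (n - 6) := by
  rw [show (n:ℝ) - 6 = ((n - 6 : ℕ) : ℝ) by push_cast [Nat.cast_sub hn]; ring,
    show ((n-6:ℕ):ℝ)/5 = (1/5) * (n-6:ℕ) by ring, Real.rpow_mul (by norm_num),
    Real.rpow_natCast, v]

lemma key : ∀ n : ℕ, 14 ≤ n → ((n:ℝ) + 24) * v ^ (n - 6) ≤ 1.7354 * u ^ (n - 1) := by
  intro n hn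
  induction n, hn using Nat.le_induction with
  | base =>
      have h1 : v ^ (14 - 6) ≤ (1.431 : ℝ) ^ 8 := pow_le_pow_left₀ hv0.le hvu 8
      have h2 : (1.5848 : ℝ) ^ 13 ≤ u ^ (14 - 1) := pow_le_pow_left₀ (by norm_num) hul 13
      push_cast
      nlinarith [h1, h2]
  | succ n hn ih =>
      have h6 : 6 ≤ n := by omega
      have h1 : 1 ≤ n := by omega
      have e1 : n + 1 - 6 = (n - 6) + 1 := by omega
      have e2 : n + 1 - 1 = (n - 1) + 1 := by omega
      rw [e1, e2, pow_succ, pow_succ]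
      push_cast
      have hvp : (0:ℝ) ≤ v ^ (n - 6) := pow_nonneg hv0.le _
      have hcast : (14:ℝ) ≤ (n:ℝ) := by exact_mod_cast hn
      -- ((n+1)+24) * (v^(n-6) * v) ≤ 1.7354 * (u^(n-1) * u)
      have step1 : ((n:ℝ) + 1 + 24) * v ≤ ((n:ℝ) + 24) * u := by nlinarith [hvu, hul]
      calc ((n:ℝ) + 1 + 24) * (v ^ (n-6) * v)
          = (((n:ℝ) + 1 + 24) * v) * v ^ (n-6) := by ring
        _ ≤ (((n:ℝ) + 24) * u) * v ^ (n-6) := by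
            exact mul_le_mul_of_nonneg_right step1 hvp
        _ = u * (((n:ℝ) + 24) * v ^ (n-6)) := by ring
        _ ≤ u * (1.7354 * u ^ (n-1)) := by
            exact mul_le_mul_of_nonneg_left ih hu0.le
        _ = 1.7354 * (u ^ (n-1) * u) := by ring

lemma main_ineq : ∀ n : ℕ, 7 ≤ n → f n ≤ 0.85 * u ^ n := by
  intro n hn
  have hu2 : (1.5848:ℝ)^2 ≤ u^2 := pow_le_pow_left₀ (by norm_num) hul 2
  have hu3 : (1.5848:ℝ)^3 ≤ u^3 := pow_le_pow_left₀ (by norm_num) hul 3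
  have hu4 : (1.5848:ℝ)^4 ≤ u^4 := pow_le_pow_left₀ (by norm_num) hul 4
  by_cases h13 : n ≤ 13
  · interval_cases n
    · -- n = 7
      have h : u ^ 7 = u ^ 2 * u ^ 5 := by ring
      rw [hu5] at h
      rw [f]; norm_num [Nat.choose]; nlinarith [hu2, h]
    · have h : u ^ 8 = u ^ 3 * u ^ 5 := by ring
      rw [hu5] at h
      rw [f]; norm_num [Nat.choose]; nlinarith [hu3, h]
    · have h : u ^ 9 = u ^ 4 * u ^ 5 := by ring
      rw [hu5] at h
      rw [f]; norm_num [Nat.choose]; nlinarith [hu4, h]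
    · have h : u ^ 10 = u ^ 5 * u ^ 5 := by ring
      rw [hu5] at h
      rw [f]; norm_num [Nat.choose]; nlinarith [h]
    · have h : u ^ 11 = u * (u ^ 5 * u ^ 5) := by ring
      rw [hu5] at h
      rw [f]; norm_num [Nat.choose]; nlinarith [hul, h]
    · have h : u ^ 12 = u ^ 2 * (u ^ 5 * u ^ 5) := by ring
      rw [hu5] at h
      rw [f]; norm_num [Nat.choose]; nlinarith [hu2, h]
    · have h : u ^ 13 = u ^ 3 * (u ^ 5 * u ^ 5) := by ring
      rw [hu5] at h
      rw [f]; norm_num [Nat.choose]; nlinarith [hu3, h]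
  · -- n ≥ 14
    push_neg at h13
    have h14 : 14 ≤ n := h13
    have h1 : 1 ≤ n := by omega
    have h6 : 6 ≤ n := by omega
    have hk := key n h14
    have hvp : (0:ℝ) ≤ v ^ (n - 6) := pow_nonneg hv0.le _
    have hup : (0:ℝ) < u ^ (n - 1) := pow_pos hu0 _
    have hA : f n ≤ u ^ (n-1) + (((n:ℝ) + 24) / 5) * v ^ (n-6) := by
      rw [f]
      have hn8 : ¬ n ≤ 8 := by omega
      have hn13 : ¬ n ≤ 13 := by omega
      simp only [hn8, hn13, if_false]
      by_cases h30 : n ≤ 30 <;> simp only [h30, if_true, if_false] <;>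
        rw [pow10' h1, pow6' h6]
      · have hc : ((n:ℝ) + 144) / 30 ≤ ((n:ℝ) + 24) / 5 := by
          have : (0:ℝ) ≤ (n:ℝ) := Nat.cast_nonneg n
          linarith
        nlinarith [mul_le_mul_of_nonneg_right hc hvp]
      · have hc : ((n:ℝ) - 1) / 5 ≤ ((n:ℝ) + 24) / 5 := by linarith
        nlinarith [mul_le_mul_of_nonneg_right hc hvp]
    have h2 : u ^ (n-1) + (((n:ℝ) + 24) / 5) * v ^ (n-6) ≤ (1 + 1.7354/5) * u ^ (n-1) := by
      nlinarith [hk]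
    have h3 : (1 + 1.7354/5 : ℝ) * u ^ (n-1) ≤ 0.85 * u ^ n := by
      have e : u ^ n = u ^ (n-1) * u := by
        rw [← pow_succ]; congr 1; omega
      rw [e]
      nlinarith [hul, hup]
    linarith

theorem f_div_g_le_of_ge_seven :
    (∀ n : ℕ, 7 ≤ n → f n / g n ≤ f 10 / g 10) ∧ f 10 / g 10 ≤ 0.85 := by
  have hg : ∀ n : ℕ, g n = u ^ n := fun n => pow10 n
  have hf10 : f 10 = 85 := by rw [f]; norm_num [Nat.choose]
  have hg10 : g 10 = 100 := by
    rw [hg, show (10:ℕ) = 5 + 5 from rfl, pow_add, hu5]; norm_num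
  constructor
  · intro n hn
    rw [hf10, hg10, hg]
    have hup : (0:ℝ) < u ^ n := pow_pos hu0 _
    rw [div_le_div_iff₀ hup (by norm_num)]
    have := main_ineq n hn
    nlinarith [this]
  · rw [hf10, hg10]; norm_num
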